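/- Let φ be a monotone 1-in-3 SAT instance with n variables and m clauses in which every variable occurs in at least one clause, and let G_φ be the associated classified matching instance (ranks ignored). Then there exists a feasible matching in G_φ of cardinality 2n + 6m — i.e., one matching every applicant — if and only if φ has a 1-in-3 satisfying assignment. -/

import Mathlib

open scoped Classical

/-- Applicants of the instance `G_φ`: `av i = aᵢ`, `bv i = bᵢ`,
`ac i j = a_{ij}` and `bc i j = b_{ij}` (the latter two meaningful when `i ∈ C_j`). -/
inductive App (n m : ℕ) where
  | av (i : Fin n) : App n m
  | bv (i : Fin n) : App n m
  | ac (i : Fin n) (j : Fin m) : App n m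
  | bc (i : Fin n) (j : Fin m) : App n m
  deriving DecidableEq, Fintype

/-- Posts of the instance `G_φ`: `pv i = pᵢ`, `pt i = pᵢᵗ`, `pf i = pᵢᶠ`
and `pc j = pⱼᶜ`. -/
inductive Post (n m : ℕ) where
  | pv (i : Fin n) : Post n m
  | pt (i : Fin n) : Post n m
  | pf (i : Fin n) : Post n m
  | pc (j : Fin m) : Post n m
  deriving DecidableEq, Fintype

namespace Red

variable {n m : ℕ}

/-- The rank-1 (first-choice) post of each applicant. -/
def rank1 : App n m → Post n m
  | .av i => .pv i
  | .bv i => .pv i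
  | .ac _ j => .pc j
  | .bc _ j => .pc j

/-- The rank-2 (second-choice) post of each applicant. -/
def rank2 : App n m → Post n m
  | .av i => .pt i
  | .bv i => .pf i
  | .ac i _ => .pt i
  | .bc i _ => .pf i

/-- The rank of a post on an applicant's preference list (3 = unacceptable). -/
def rk (x : App n m) (p : Post n m) : ℕ :=
  if p = rank1 x then 1 else if p = rank2 x then 2 else 3

/-- Only pairs `(i, j)` with `i ∈ C_j` give rise to applicants `a_{ij}`, `b_{ij}`. -/
def Valid (Cl : Fin m → Finset (Fin n)) : App n m → Prop
  | .av _ => True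
  | .bv _ => True
  | .ac i j => i ∈ Cl j
  | .bc i j => i ∈ Cl j

/-- `k_i`: the number of clauses containing variable `i`. -/
def occ (Cl : Fin m → Finset (Fin n)) (i : Fin n) : ℕ :=
  (Finset.univ.filter fun j => i ∈ Cl j).card

/-- `M` is a matching of `G_φ`: each (existing) applicant is assigned to at most one
post on its preference list. -/
def IsMatching (Cl : Fin m → Finset (Fin n)) (M : App n m → Option (Post n m)) : Prop :=
  ∀ x p, M x = some p → Valid Cl x ∧ (p = rank1 x ∨ p = rank2 x)

/-- The number of applicants matched to post `p`. -/
def cnt (M : App n m → Option (Post n m)) (p : Post n m) : ℕ :=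
  (Finset.univ.filter fun x => M x = some p).card

/-- `M` is feasible: all post quotas and all class quotas of `G_φ` are respected. -/
def Feasible (Cl : Fin m → Finset (Fin n)) (M : App n m → Option (Post n m)) : Prop :=
  -- post `pᵢ` has quota 1 and no classes
  (∀ i, cnt M (.pv i) ≤ 1) ∧
  -- post `pⱼᶜ` has quota 3
  (∀ j, cnt M (.pc j) ≤ 3) ∧
  -- class `S_{ij} = {a_{ij}, b_{ij}}` of `pⱼᶜ`, quota 1
  (∀ j, ∀ i ∈ Cl j,
    (({App.ac i j, App.bc i j} : Finset (App n m)).filter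
      fun x => M x = some (.pc j)).card ≤ 1) ∧
  -- class `S_{1j} = {a_{ij} : i ∈ C_j}` of `pⱼᶜ`, quota 1
  (∀ j, ((Cl j).filter fun i => M (.ac i j) = some (.pc j)).card ≤ 1) ∧
  -- class `S_{2j} = {b_{ij} : i ∈ C_j}` of `pⱼᶜ`, quota 2
  (∀ j, ((Cl j).filter fun i => M (.bc i j) = some (.pc j)).card ≤ 2) ∧
  -- post `pᵢᵗ` has quota `k_i`
  (∀ i, cnt M (.pt i) ≤ occ Cl i) ∧
  -- class `Sⱼᵗ = {a_{ij}, aᵢ}` of `pᵢᵗ`, quota 1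
  (∀ i, ∀ j, i ∈ Cl j →
    (({App.ac i j, App.av i} : Finset (App n m)).filter
      fun x => M x = some (.pt i)).card ≤ 1) ∧
  -- post `pᵢᶠ` has quota `k_i`
  (∀ i, cnt M (.pf i) ≤ occ Cl i) ∧
  -- class `Sⱼᶠ = {b_{ij}, bᵢ}` of `pᵢᶠ`, quota 1
  (∀ i, ∀ j, i ∈ Cl j →
    (({App.bc i j, App.bv i} : Finset (App n m)).filter
      fun x => M x = some (.pf i)).card ≤ 1)

/-- Applicant `x` prefers matching `M` to matching `M'`. -/
def Prefers (M M' : App n m → Option (Post n m)) (x : App n m) : Prop :=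
  ∃ p, M x = some p ∧ (M' x = none ∨ ∃ p', M' x = some p' ∧ rk x p < rk x p')

/-- `M'` is more popular than `M`. -/
def MorePopular (M' M : App n m → Option (Post n m)) : Prop :=
  (Finset.univ.filter fun x => Prefers M M' x).card <
    (Finset.univ.filter fun x => Prefers M' M x).card

/-- `M` is popular among all feasible matchings of `G_φ`. -/
def Popular (Cl : Fin m → Finset (Fin n)) (M : App n m → Option (Post n m)) : Prop :=
  IsMatching Cl M ∧ Feasible Cl M ∧
    ∀ M', IsMatching Cl M' → Feasible Cl M' → ¬ MorePopular M' M

/-- `φ` has a 1-in-3 satisfying assignment. -/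
def OneInThree (Cl : Fin m → Finset (Fin n)) : Prop :=
  ∃ η : Fin n → Bool, ∀ j, ((Cl j).filter fun i => η i = true).card = 1

end Red

namespace Red
variable {n m : ℕ}

lemma card_filter_app (P : App n m → Prop) :
    ((Finset.univ : Finset (App n m)).filter fun x => P x).card =
      ((Finset.univ : Finset (Fin n)).filter fun i => P (.av i)).card +
      ((Finset.univ : Finset (Fin n)).filter fun i => P (.bv i)).card +
      (((Finset.univ ×ˢ Finset.univ : Finset (Fin n × Fin m))).filter fun p => P (.ac p.1 p.2)).card +
      (((Finset.univ ×ˢ Finset.univ : Finset (Fin n × Fin m))).filter fun p => P (.bc p.1 p.2)).card := by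
  classical
  rw [Finset.card_filter, Finset.card_filter, Finset.card_filter, Finset.card_filter,
    Finset.card_filter]
  rw [show (Finset.univ : Finset (App n m)) =
      ((Finset.univ.image App.av ∪ Finset.univ.image App.bv) ∪
        ((Finset.univ ×ˢ Finset.univ).image (fun p : Fin n × Fin m => App.ac p.1 p.2) ∪
          (Finset.univ ×ˢ Finset.univ).image (fun p : Fin n × Fin m => App.bc p.1 p.2))) by
    ext x; cases x <;> simp]
  rw [Finset.sum_union, Finset.sum_union, Finset.sum_union]
  · rw [Finset.sum_image (by intro p _ q _ h; cases h; rfl), Finset.sum_image (by intro p _ q _ h; cases h; rfl),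
      Finset.sum_image (by intro p _ q _ h; cases p; cases q; simp_all),
      Finset.sum_image (by intro p _ q _ h; cases p; cases q; simp_all)]
    ring
  all_goals rw [Finset.disjoint_left]; intro a ha hb; cases a <;> simp_all

lemma card_valid (Cl : Fin m → Finset (Fin n)) (h3 : ∀ j, (Cl j).card = 3) :
    ((Finset.univ : Finset (App n m)).filter fun x => Valid Cl x).card = 2 * n + 6 * m := by
  classical
  rw [card_filter_app]
  have hac : (((Finset.univ ×ˢ Finset.univ : Finset (Fin n × Fin m))).filter
      fun p => Valid Cl (App.ac p.1 p.2)).card = 3 * m := by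
    rw [Finset.card_filter, Finset.sum_product, Finset.sum_comm]
    have : ∀ j : Fin m, (∑ i : Fin n, if Valid Cl (App.ac i j) then 1 else 0) = 3 := by
      intro j
      rw [← Finset.card_filter]
      rw [show ((Finset.univ : Finset (Fin n)).filter fun i => Valid Cl (App.ac i j)) = Cl j by
        ext i; rw [Finset.mem_filter]; simp [Valid]]
      exact h3 j
    simp [this, Finset.sum_const, mul_comm]
  have hbc : (((Finset.univ ×ˢ Finset.univ : Finset (Fin n × Fin m))).filter
      fun p => Valid Cl (App.bc p.1 p.2)).card = 3 * m := by
    rw [Finset.card_filter, Finset.sum_product, Finset.sum_comm]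
    have : ∀ j : Fin m, (∑ i : Fin n, if Valid Cl (App.bc i j) then 1 else 0) = 3 := by
      intro j
      rw [← Finset.card_filter]
      rw [show ((Finset.univ : Finset (Fin n)).filter fun i => Valid Cl (App.bc i j)) = Cl j by
        ext i; rw [Finset.mem_filter]; simp [Valid]]
      exact h3 j
    simp [this, Finset.sum_const, mul_comm]
  rw [hac, hbc]
  have hv1 : ((Finset.univ : Finset (Fin n)).filter fun i => Valid Cl (App.av i : App n m)) = Finset.univ :=
    Finset.filter_true_of_mem (fun _ _ => trivial)
  have hv2 : ((Finset.univ : Finset (Fin n)).filter fun i => Valid Cl (App.bv i : App n m)) = Finset.univ :=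
    Finset.filter_true_of_mem (fun _ _ => trivial)
  rw [hv1, hv2, Finset.card_univ, Fintype.card_fin]
  omega
end Red
namespace Red
variable {n m : ℕ}

/-- The matching built from a 1-in-3 assignment `η`. -/
def mk (Cl : Fin m → Finset (Fin n)) (η : Fin n → Bool) : App n m → Option (Post n m)
  | .av i => some (if η i then .pt i else .pv i)
  | .bv i => some (if η i then .pv i else .pf i)
  | .ac i j => if i ∈ Cl j then some (if η i then .pc j else .pt i) else none
  | .bc i j => if i ∈ Cl j then some (if η i then .pf i else .pc j) else none

variable {Cl : Fin m → Finset (Fin n)} {η : Fin n → Bool}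

lemma mk_eq_pv {i : Fin n} (x : App n m) :
    mk Cl η x = some (.pv i) ↔ (x = .av i ∧ η i = false) ∨ (x = .bv i ∧ η i = true) := by
  cases x <;> simp only [mk] <;> split_ifs <;> simp_all <;> aesop

lemma mk_eq_pt {i : Fin n} (x : App n m) :
    mk Cl η x = some (.pt i) ↔
      (x = .av i ∧ η i = true) ∨ (∃ j, x = .ac i j ∧ i ∈ Cl j ∧ η i = false) := by
  cases x <;> simp only [mk] <;> split_ifs <;> simp_all <;> aesop

lemma mk_eq_pf {i : Fin n} (x : App n m) :
    mk Cl η x = some (.pf i) ↔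
      (x = .bv i ∧ η i = false) ∨ (∃ j, x = .bc i j ∧ i ∈ Cl j ∧ η i = true) := by
  cases x <;> simp only [mk] <;> split_ifs <;> simp_all <;> aesop

lemma mk_eq_pc {j : Fin m} (x : App n m) :
    mk Cl η x = some (.pc j) ↔
      (∃ i, x = .ac i j ∧ i ∈ Cl j ∧ η i = true) ∨
      (∃ i, x = .bc i j ∧ i ∈ Cl j ∧ η i = false) := by
  cases x <;> simp only [mk] <;> split_ifs <;> simp_all <;> aesop

end Red
namespace Red
variable {n m : ℕ}

/-- Variable index of an applicant. -/
def proj : App n m → Fin n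
  | .av i => i
  | .bv i => i
  | .ac i _ => i
  | .bc i _ => i

/-- Clause index of an applicant (if any). -/
def projJ : App n m → Option (Fin m)
  | .ac _ j => some j
  | .bc _ j => some j
  | _ => none

variable {Cl : Fin m → Finset (Fin n)} {η : Fin n → Bool}

lemma occ_pos (hocc : ∀ i, ∃ j, i ∈ Cl j) (i : Fin n) : 1 ≤ occ Cl i := by
  obtain ⟨j, hj⟩ := hocc i
  exact Finset.card_pos.mpr ⟨j, by simp [hj]⟩

lemma backward (h3 : ∀ j, (Cl j).card = 3) (hocc : ∀ i, ∃ j, i ∈ Cl j)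
    (hη : ∀ j, ((Cl j).filter fun i => η i = true).card = 1) :
    IsMatching Cl (mk Cl η) ∧ Feasible Cl (mk Cl η) ∧
      (Finset.univ.filter fun x => (mk Cl η x).isSome).card = 2 * n + 6 * m := by
  classical
  refine ⟨?_, ⟨?_, ?_, ?_, ?_, ?_, ?_, ?_, ?_, ?_⟩, ?_⟩
  · -- IsMatching
    intro x p h
    cases x <;> simp only [mk, Valid, rank1, rank2] at h ⊢ <;> split_ifs at h <;>
      simp_all
  · -- pv quota
    intro i
    apply Finset.card_le_one.mpr
    intro x hx y hy
    simp only [Finset.mem_filter, mk_eq_pv] at hx hy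
    rcases hx.2 with ⟨rfl, h1⟩ | ⟨rfl, h1⟩ <;> rcases hy.2 with ⟨rfl, h2⟩ | ⟨rfl, h2⟩ <;>
      simp_all
  · -- pc quota
    intro j
    have := h3 j
    calc cnt (mk Cl η) (.pc j) ≤ (Cl j).card := by
          apply Finset.card_le_card_of_injOn proj
          · intro x hx
            simp only [Finset.mem_coe, Finset.mem_filter, mk_eq_pc] at hx
            rcases hx.2 with ⟨i, rfl, hi, _⟩ | ⟨i, rfl, hi, _⟩ <;> simpa [proj]
          · intro x hx y hy hxy
            simp only [Finset.coe_filter, Set.mem_setOf_eq, mk_eq_pc] at hx hy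
            rcases hx.2 with ⟨i, rfl, hi, h1⟩ | ⟨i, rfl, hi, h1⟩ <;>
              rcases hy.2 with ⟨i', rfl, hi', h2⟩ | ⟨i', rfl, hi', h2⟩ <;>
              simp_all [proj]
      _ = 3 := this
  · -- pair class S_ij
    intro j i hi
    apply Finset.card_le_one.mpr
    intro x hx y hy
    simp only [Finset.mem_filter, Finset.mem_insert, Finset.mem_singleton, mk_eq_pc] at hx hy
    rcases hx.1 with rfl | rfl <;> rcases hy.1 with rfl | rfl <;> simp_all
  · -- class S1j
    intro j
    have he : ((Cl j).filter fun i => mk Cl η (.ac i j) = some (.pc j)) =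
        (Cl j).filter fun i => η i = true := by
      apply Finset.filter_congr
      intro i hi
      simp [mk_eq_pc, hi]
    rw [he, hη j]
  · -- class S2j
    intro j
    have he : ((Cl j).filter fun i => mk Cl η (.bc i j) = some (.pc j)) =
        (Cl j).filter fun i => ¬ (η i = true) := by
      apply Finset.filter_congr
      intro i hi
      simp [mk_eq_pc, hi]
    have hc := Finset.card_filter_add_card_filter_not
      (s := Cl j) (p := fun i => η i = true)
    rw [hη j, h3 j] at hc
    rw [he]
    omega
  · -- pt quota
    intro i
    by_cases hi : η i = true
    · have hs : (Finset.univ.filter fun x => mk Cl η x = some (.pt i)) ⊆ {App.av i} := by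
        intro x hx
        simp only [Finset.mem_filter, mk_eq_pt] at hx
        rcases hx.2 with ⟨rfl, _⟩ | ⟨j, rfl, _, h2⟩
        · simp
        · simp_all
      calc cnt (mk Cl η) (.pt i) ≤ 1 := by
            simpa [cnt] using Finset.card_le_card hs
        _ ≤ occ Cl i := occ_pos hocc i
    · have : cnt (mk Cl η) (.pt i) ≤
          ((Finset.univ.filter fun j => i ∈ Cl j).image some).card := by
        apply Finset.card_le_card_of_injOn projJ
        · intro x hx
          simp only [Finset.mem_coe, Finset.mem_filter, mk_eq_pt] at hx
          rcases hx.2 with ⟨rfl, h1⟩ | ⟨j, rfl, hj, _⟩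
          · exact absurd h1 hi
          · simp only [projJ, Finset.mem_coe, Finset.mem_image, Finset.mem_filter]
            exact ⟨j, ⟨Finset.mem_univ j, hj⟩, rfl⟩
        · intro x hx y hy hxy
          simp only [Finset.coe_filter, Set.mem_setOf_eq, mk_eq_pt] at hx hy
          rcases hx.2 with ⟨rfl, h1⟩ | ⟨j, rfl, _, _⟩ <;>
            rcases hy.2 with ⟨rfl, h2⟩ | ⟨j', rfl, _, _⟩ <;> simp_all [projJ]
      rwa [Finset.card_image_of_injective _ (Option.some_injective _)] at this
  · -- class Sjt
    intro i j hij
    apply Finset.card_le_one.mpr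
    intro x hx y hy
    simp only [Finset.mem_filter, Finset.mem_insert, Finset.mem_singleton, mk_eq_pt] at hx hy
    rcases hx.1 with rfl | rfl <;> rcases hy.1 with rfl | rfl <;> simp_all
  · -- pf quota
    intro i
    by_cases hi : η i = true
    · have : cnt (mk Cl η) (.pf i) ≤
          ((Finset.univ.filter fun j => i ∈ Cl j).image some).card := by
        apply Finset.card_le_card_of_injOn projJ
        · intro x hx
          simp only [Finset.mem_coe, Finset.mem_filter, mk_eq_pf] at hx
          rcases hx.2 with ⟨rfl, h1⟩ | ⟨j, rfl, hj, _⟩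
          · simp_all
          · simp only [projJ, Finset.mem_coe, Finset.mem_image, Finset.mem_filter]
            exact ⟨j, ⟨Finset.mem_univ j, hj⟩, rfl⟩
        · intro x hx y hy hxy
          simp only [Finset.coe_filter, Set.mem_setOf_eq, mk_eq_pf] at hx hy
          rcases hx.2 with ⟨rfl, h1⟩ | ⟨j, rfl, _, _⟩ <;>
            rcases hy.2 with ⟨rfl, h2⟩ | ⟨j', rfl, _, _⟩ <;> simp_all [projJ]
      rwa [Finset.card_image_of_injective _ (Option.some_injective _)] at this
    · have hs : (Finset.univ.filter fun x => mk Cl η x = some (.pf i)) ⊆ {App.bv i} := by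
        intro x hx
        simp only [Finset.mem_filter, mk_eq_pf] at hx
        rcases hx.2 with ⟨rfl, _⟩ | ⟨j, rfl, _, h2⟩
        · simp
        · simp_all
      calc cnt (mk Cl η) (.pf i) ≤ 1 := by
            simpa [cnt] using Finset.card_le_card hs
        _ ≤ occ Cl i := occ_pos hocc i
  · -- class Sjf
    intro i j hij
    apply Finset.card_le_one.mpr
    intro x hx y hy
    simp only [Finset.mem_filter, Finset.mem_insert, Finset.mem_singleton, mk_eq_pf] at hx hy
    rcases hx.1 with rfl | rfl <;> rcases hy.1 with rfl | rfl <;> simp_all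
  · -- cardinality
    have he : (Finset.univ.filter fun x => (mk Cl η x).isSome) =
        Finset.univ.filter fun x => Valid Cl x := by
      apply Finset.filter_congr
      intro x _
      cases x <;> simp only [mk, Valid] <;> split_ifs <;> simp_all
    rw [he, card_valid Cl h3]

end Red
namespace Red
variable {n m : ℕ} {Cl : Fin m → Finset (Fin n)}

lemma two_le_cnt {M : App n m → Option (Post n m)} {x y : App n m} {p : Post n m}
    (hxy : x ≠ y) (hx : M x = some p) (hy : M y = some p) : 2 ≤ cnt M p := by
  classical
  have hsub : ({x, y} : Finset (App n m)) ⊆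
      Finset.univ.filter fun z => M z = some p := by
    intro z hz
    simp only [Finset.mem_insert, Finset.mem_singleton] at hz
    rcases hz with rfl | rfl <;> simp [hx, hy]
  calc 2 = ({x, y} : Finset (App n m)).card := by
        rw [Finset.card_insert_of_notMem (by simpa using hxy), Finset.card_singleton]
    _ ≤ _ := Finset.card_le_card hsub
  
lemma two_le_pair {M : App n m → Option (Post n m)} {x y : App n m} {p : Post n m}
    (hxy : x ≠ y) (hx : M x = some p) (hy : M y = some p) :
    2 ≤ (({x, y} : Finset (App n m)).filter fun z => M z = some p).card := by
  classical
  have he : (({x, y} : Finset (App n m)).filter fun z => M z = some p) = {x, y} := by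
    apply Finset.filter_true_of_mem
    intro z hz
    simp only [Finset.mem_insert, Finset.mem_singleton] at hz
    rcases hz with rfl | rfl <;> assumption
  rw [he, Finset.card_insert_of_notMem (by simpa using hxy), Finset.card_singleton]

lemma forward (h3 : ∀ j, (Cl j).card = 3) (M : App n m → Option (Post n m))
    (hM : IsMatching Cl M) (hF : Feasible Cl M)
    (hcard : (Finset.univ.filter fun x => (M x).isSome).card = 2 * n + 6 * m) :
    OneInThree Cl := by
  classical
  obtain ⟨f1, f2, f3, f4, f5, f6, f7, f8, f9⟩ := hF
  -- every valid applicant is matched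
  have hsub : (Finset.univ.filter fun x => (M x).isSome) ⊆
      Finset.univ.filter fun x => Valid Cl x := by
    intro x hx
    simp only [Finset.mem_filter] at hx ⊢
    obtain ⟨p, hp⟩ := Option.isSome_iff_exists.mp hx.2
    exact ⟨hx.1, (hM x p hp).1⟩
  have heq := Finset.eq_of_subset_of_card_le hsub
    (by rw [card_valid Cl h3, hcard])
  have hall : ∀ x, Valid Cl x → M x = some (rank1 x) ∨ M x = some (rank2 x) := by
    intro x hx
    have hx' : x ∈ Finset.univ.filter fun x => (M x).isSome := by
      rw [heq]; simp [hx]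
    simp only [Finset.mem_filter] at hx'
    obtain ⟨p, hp⟩ := Option.isSome_iff_exists.mp hx'.2
    rcases (hM x p hp).2 with h | h <;> [left; right] <;> rw [← h] <;> exact hp
  have hav : ∀ i, M (.av i) = some (.pv i) ∨ M (.av i) = some (.pt i) := fun i =>
    hall (.av i) trivial
  have hbv : ∀ i, M (.bv i) = some (.pv i) ∨ M (.bv i) = some (.pf i) := fun i =>
    hall (.bv i) trivial
  have hac : ∀ i j, i ∈ Cl j →
      M (.ac i j) = some (.pc j) ∨ M (.ac i j) = some (.pt i) := fun i j hj =>
    hall (.ac i j) hj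
  have hbc : ∀ i j, i ∈ Cl j →
      M (.bc i j) = some (.pc j) ∨ M (.bc i j) = some (.pf i) := fun i j hj =>
    hall (.bc i j) hj
  -- the true case
  have hT : ∀ i, M (.av i) = some (.pt i) → ∀ j, i ∈ Cl j →
      M (.ac i j) = some (.pc j) ∧ ¬ M (.bc i j) = some (.pc j) := by
    intro i ht j hj
    have h1 : M (.ac i j) = some (.pc j) := by
      rcases hac i j hj with h | h
      · exact h
      · have h2 := two_le_pair (M := M) (x := App.ac i j) (y := App.av i) (by simp) h ht
        have h1 := f7 i j hj
        omega
    refine ⟨h1, fun h2 => ?_⟩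
    have h4 := two_le_pair (M := M) (x := App.ac i j) (y := App.bc i j) (by simp) h1 h2
    have h5 := f3 j i hj
    omega
  -- the false case
  have hFc : ∀ i, M (.av i) = some (.pv i) → ∀ j, i ∈ Cl j →
      ¬ M (.ac i j) = some (.pc j) ∧ M (.bc i j) = some (.pc j) := by
    intro i hf j hj
    have hb : M (.bv i) = some (.pf i) := by
      rcases hbv i with h | h
      · have h2 := two_le_cnt (M := M) (x := App.av i) (y := App.bv i) (by simp) hf h
        have h1 := f1 i
        omega
      · exact h
    have h2 : M (.bc i j) = some (.pc j) := by
      rcases hbc i j hj with h | h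
      · exact h
      · have h2 := two_le_pair (M := M) (x := App.bc i j) (y := App.bv i) (by simp) h hb
        have h1 := f9 i j hj
        omega
    refine ⟨fun h1 => ?_, h2⟩
    have h4 := two_le_pair (M := M) (x := App.ac i j) (y := App.bc i j) (by simp) h1 h2
    have h5 := f3 j i hj
    omega
  -- the assignment
  refine ⟨fun i => decide (M (.av i) = some (.pt i)), fun j => ?_⟩
  have e1 : ((Cl j).filter fun i => (decide (M (.av i) = some (.pt i))) = true) =
      (Cl j).filter fun i => M (.ac i j) = some (.pc j) := by
    apply Finset.filter_congr
    intro i hi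
    simp only [decide_eq_true_eq]
    constructor
    · intro h; exact (hT i h j hi).1
    · intro h
      rcases hav i with h' | h'
      · exact absurd h (hFc i h' j hi).1
      · exact h'
  have e2 : ((Cl j).filter fun i => ¬ ((decide (M (.av i) = some (.pt i))) = true)) =
      (Cl j).filter fun i => M (.bc i j) = some (.pc j) := by
    apply Finset.filter_congr
    intro i hi
    simp only [decide_eq_true_eq]
    constructor
    · intro h
      rcases hav i with h' | h'
      · exact (hFc i h' j hi).2
      · exact absurd h' h
    · intro h h'
      exact (hT i h' j hi).2 h
  have hc := Finset.card_filter_add_card_filter_not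
    (s := Cl j) (p := fun i => (decide (M (.av i) = some (.pt i))) = true)
  rw [h3 j, e1, e2] at hc
  have c1 := f4 j
  have c2 := f5 j
  rw [e1]
  omega

end Red

/-- for a monotone 1-in-3 SAT instance `φ` (clauses of size exactly 3,
every variable occurring in some clause), the instance `G_φ` (ranks ignored) admits a
feasible matching of cardinality `2n + 6m` — i.e. matching every applicant — iff `φ`
has a 1-in-3 satisfying assignment. -/
theorem stmt16 (n m : ℕ) (Cl : Fin m → Finset (Fin n))
    (h3 : ∀ j, (Cl j).card = 3) (hocc : ∀ i, ∃ j, i ∈ Cl j) :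
    (∃ M : App n m → Option (Post n m), Red.IsMatching Cl M ∧ Red.Feasible Cl M ∧
      (Finset.univ.filter fun x => (M x).isSome).card = 2 * n + 6 * m) ↔
    Red.OneInThree Cl := by
  constructor
  · rintro ⟨M, hM, hF, hcard⟩
    exact Red.forward h3 M hM hF hcard
  · rintro ⟨η, hη⟩
    obtain ⟨h1, h2, h3'⟩ := Red.backward (η := η) h3 hocc hη
    exact ⟨Red.mk Cl η, h1, h2, h3'⟩
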